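/- Let ε ∈ (0,1), Δ > 0, and T > 0 with T·Δ² ≥ 1; write L = log(T·Δ²). Let Z₁, Z₂, … be i.i.d. real random variables such that Zᵢ − Δ′ is 1-subgaussian for some constant Δ′ ≥ (1−ε)Δ, and let Sₙ = Z₁ + ⋯ + Zₙ. Define the stopping time τ = inf{n ≥ 1 : 2(1−ε)Δ·|Sₙ| ≥ L}. Then E[τ] ≤ 2 + L/(2(1−ε)²Δ²) + (2√L + 2)/((1−ε)²Δ²). -/

import Mathlib

open MeasureTheory ProbabilityTheory Real
open scoped ENNReal

/-- `W` is 1-subgaussian (mean-zero form): `E[exp(λW)] ≤ exp(λ²/2)` for all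
`λ ∈ ℝ` (with the integrability of the moment generating function). -/
def IsOneSubgaussianMGF {Ω : Type*} [MeasurableSpace Ω] (μ : Measure Ω) (W : Ω → ℝ) : Prop :=
  ∀ l : ℝ, Integrable (fun ω => Real.exp (l * W ω)) μ ∧
    (∫ ω, Real.exp (l * W ω) ∂μ) ≤ Real.exp (l ^ 2 / 2)

set_option maxHeartbeats 2000000 in
/-- Let `ε ∈ (0,1)`, `Δ > 0`, `T > 0`, `T·Δ² ≥ 1`, `L = log(T·Δ²)`.  Let `Z₁, Z₂, …` be
i.i.d. with `Zᵢ − Δ′` 1-subgaussian for some constant `Δ′ ≥ (1−ε)Δ`, and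
`Sₙ = Z₁ + ⋯ + Zₙ`.  For the stopping time `τ = inf{n ≥ 1 : 2(1−ε)Δ·|Sₙ| ≥ L}`
(equal to `∞` if no such `n` exists),
`E[τ] ≤ 2 + L/(2(1−ε)²Δ²) + (2√L + 2)/((1−ε)²Δ²)`. -/
theorem stmt10 {Ω : Type*} [MeasurableSpace Ω] (μ : Measure Ω) [IsProbabilityMeasure μ]
    (Z : ℕ → Ω → ℝ) (hmeas : ∀ i, Measurable (Z i))
    (hindep : iIndepFun Z μ)
    (hident : ∀ i, IdentDistrib (Z i) (Z 0) μ μ)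
    (ε Δ T : ℝ) (hε : ε ∈ Set.Ioo (0 : ℝ) 1) (hΔ : 0 < Δ) (hT : 0 < T)
    (hTΔ : 1 ≤ T * Δ ^ 2)
    (Δ' : ℝ) (hΔ' : (1 - ε) * Δ ≤ Δ')
    (hsub : ∀ i, IsOneSubgaussianMGF μ (fun ω => Z i ω - Δ'))
    (L : ℝ) (hL : L = Real.log (T * Δ ^ 2)) :
    (∫⁻ ω, ⨅ n ∈ {n : ℕ | 1 ≤ n ∧
        L ≤ 2 * (1 - ε) * Δ * |∑ i ∈ Finset.range n, Z i ω|}, (n : ℝ≥0∞) ∂μ) ≤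
      ENNReal.ofReal (2 + L / (2 * (1 - ε) ^ 2 * Δ ^ 2)
        + (2 * Real.sqrt L + 2) / ((1 - ε) ^ 2 * Δ ^ 2)) := by
  classical
  obtain ⟨hε0, hε1⟩ := hε
  have ha : 0 < (1 - ε) * Δ := mul_pos (by linarith) hΔ
  set a : ℝ := (1 - ε) * Δ with ha_def
  clear_value a
  have ha0 : a ≠ 0 := ne_of_gt ha
  have ha2pos : 0 < a ^ 2 := pow_pos ha 2
  have hLnn : 0 ≤ L := by rw [hL]; exact Real.log_nonneg hTΔ
  have ha2 : (1 - ε) ^ 2 * Δ ^ 2 = a ^ 2 := by rw [ha_def]; ring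
  set R : ℝ := 2 + L / (2 * (1 - ε) ^ 2 * Δ ^ 2)
      + (2 * Real.sqrt L + 2) / ((1 - ε) ^ 2 * Δ ^ 2) with hR_def
  clear_value R
  have hR2 : 2 ≤ R := by
    have h1 : 0 ≤ L / (2 * (1 - ε) ^ 2 * Δ ^ 2) := div_nonneg hLnn (by positivity)
    have h2 : 0 ≤ (2 * Real.sqrt L + 2) / ((1 - ε) ^ 2 * Δ ^ 2) := by positivity
    rw [hR_def]; linarith
  -- dispatch the trivial case L = 0
  rcases eq_or_lt_of_le hLnn with hL0 | hLpos
  · have hpt : ∀ ω, (⨅ n ∈ {n : ℕ | 1 ≤ n ∧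
        L ≤ 2 * (1 - ε) * Δ * |∑ i ∈ Finset.range n, Z i ω|}, (n : ℝ≥0∞)) ≤ 1 := by
      intro ω
      refine iInf₂_le_of_le 1 ⟨le_refl 1, ?_⟩ (by norm_num)
      rw [← hL0]
      exact mul_nonneg (by nlinarith only [hε1, hΔ]) (abs_nonneg _)
    calc (∫⁻ ω, ⨅ n ∈ {n : ℕ | 1 ≤ n ∧
          L ≤ 2 * (1 - ε) * Δ * |∑ i ∈ Finset.range n, Z i ω|}, (n : ℝ≥0∞) ∂μ)
        ≤ ∫⁻ _, 1 ∂μ := lintegral_mono hpt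
      _ = 1 := by simp
      _ ≤ ENNReal.ofReal R := by
          rw [show (1 : ℝ≥0∞) = ENNReal.ofReal 1 by simp]
          exact ENNReal.ofReal_le_ofReal (by linarith)
  -- main case : L > 0
  -- Chernoff bound for the partial sums
  have int_exp : ∀ (i : ℕ) (t : ℝ), Integrable (fun ω => exp (t * Z i ω)) μ := by
    intro i t
    have h1 := (hsub i t).1
    have : (fun ω => exp (t * Z i ω)) = fun ω => exp (t * (Z i ω - Δ')) * exp (t * Δ') := by
      ext ω; rw [← exp_add]; ring_nf
    rw [this]; exact h1.mul_const _
  have mgf_le : ∀ (i : ℕ) (t : ℝ), mgf (Z i) μ t ≤ exp (t ^ 2 / 2 + t * Δ') := by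
    intro i t
    have h2 := (hsub i t).2
    have heq : mgf (Z i) μ t = exp (t * Δ') * ∫ ω, exp (t * (Z i ω - Δ')) ∂μ := by
      rw [mgf, ← integral_const_mul]
      congr 1; ext ω; rw [← exp_add]; ring_nf
    rw [heq]
    calc exp (t * Δ') * ∫ ω, exp (t * (Z i ω - Δ')) ∂μ
        ≤ exp (t * Δ') * exp (t ^ 2 / 2) := mul_le_mul_of_nonneg_left h2 (exp_pos _).le
      _ = exp (t ^ 2 / 2 + t * Δ') := by rw [← exp_add]; ring_nf
  have chern : ∀ (n : ℕ) (r : ℝ), 0 < n → r ≤ n * Δ' →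
      (μ {ω | (∑ i ∈ Finset.range n, Z i ω) ≤ r}).toReal
        ≤ exp (-(((n : ℝ) * Δ' - r) ^ 2 / (2 * n))) := by
    intro n r hn hr
    have hnR : (0 : ℝ) < n := by exact_mod_cast hn
    set t : ℝ := (r - n * Δ') / n with ht_def
    have ht : t ≤ 0 := div_nonpos_of_nonpos_of_nonneg (by linarith) hnR.le
    have hint : Integrable (fun ω => exp (t * (∑ i ∈ Finset.range n, Z i) ω)) μ :=
      hindep.integrable_exp_mul_sum hmeas (fun i _ => int_exp i t)
    have hch := measure_le_le_exp_mul_mgf (μ := μ) (X := ∑ i ∈ Finset.range n, Z i) r ht hint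
    simp only [Finset.sum_apply] at hch
    have hmgf : mgf (∑ i ∈ Finset.range n, Z i) μ t ≤ exp (n * (t ^ 2 / 2 + t * Δ')) := by
      rw [hindep.mgf_sum hmeas]
      calc ∏ i ∈ Finset.range n, mgf (Z i) μ t
          ≤ ∏ i ∈ Finset.range n, exp (t ^ 2 / 2 + t * Δ') :=
            Finset.prod_le_prod (fun i _ => mgf_nonneg) (fun i _ => mgf_le i t)
        _ = exp (t ^ 2 / 2 + t * Δ') ^ n := by rw [Finset.prod_const, Finset.card_range]
        _ = exp (n * (t ^ 2 / 2 + t * Δ')) := by rw [← exp_nat_mul]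
    calc (μ {ω | (∑ i ∈ Finset.range n, Z i ω) ≤ r}).toReal
        ≤ exp (-t * r) * mgf (∑ i ∈ Finset.range n, Z i) μ t := hch
      _ ≤ exp (-t * r) * exp (n * (t ^ 2 / 2 + t * Δ')) :=
          mul_le_mul_of_nonneg_left hmgf (exp_pos _).le
      _ = exp (-(((n : ℝ) * Δ' - r) ^ 2 / (2 * n))) := by
          rw [← exp_add]; congr 1
          rw [ht_def]; field_simp; ring
  -- constants
  set s : ℝ := Real.sqrt L with hs_def
  clear_value s
  have hs : 0 < s := by rw [hs_def]; exact Real.sqrt_pos.mpr hLpos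
  have hs2 : s ^ 2 = L := by rw [hs_def]; exact Real.sq_sqrt hLnn
  set c : ℝ := L / (2 * a ^ 2) with hc_def
  clear_value c
  have h2a2 : (0:ℝ) < 2 * a ^ 2 := by linarith
  have hc : 0 < c := by rw [hc_def]; exact div_pos hLpos h2a2
  set d : ℝ := s / a ^ 2 with hd_def
  clear_value d
  have hd : 0 < d := by rw [hd_def]; exact div_pos hs ha2pos
  set M : ℕ := Nat.floor (c + d) with hM_def
  clear_value M
  have hMle : (M : ℝ) ≤ c + d := by
    rw [hM_def]; exact Nat.floor_le (by linarith)
  have hMgt : c + d < (M : ℝ) + 1 := by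
    rw [hM_def]; exact Nat.lt_floor_add_one _
  set q : ℝ := a ^ 2 / (s + 2) with hq_def
  clear_value q
  have hs20 : (0:ℝ) < s + 2 := by linarith
  have hq : 0 < q := by rw [hq_def]; exact div_pos ha2pos hs20
  have hinvq : 0 < 1 / q := by
    rw [one_div]; exact inv_pos.mpr hq
  have h1q : 1 / q = (s + 2) / a ^ 2 := by
    rw [hq_def, one_div, inv_div]
  -- per-term tail bound
  have hterm : ∀ j : ℕ, M + 1 ≤ j →
      μ {ω | 2 * (1 - ε) * Δ * |∑ i ∈ Finset.range j, Z i ω| < L}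
        ≤ ENNReal.ofReal (exp (-q * ((j : ℝ) - (M + 1)))) := by
    intro j hj
    have hjR : ((M : ℝ) + 1) ≤ (j : ℝ) := by exact_mod_cast hj
    have hjc : c + d < (j : ℝ) := lt_of_lt_of_le hMgt hjR
    have hj0 : 0 < j := by omega
    have hj0R : (0 : ℝ) < j := by exact_mod_cast hj0
    have hra : L / (2 * a) = c * a := by
      rw [hc_def]; field_simp
    have hcjR : c ≤ (j : ℝ) := by linarith only [hjc, hd]
    have hrle : L / (2 * a) ≤ (j : ℝ) * Δ' := by
      rw [hra]
      have h1 : c * a ≤ (j : ℝ) * a := mul_le_mul_of_nonneg_right hcjR ha.le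
      have h2 : (j : ℝ) * a ≤ (j : ℝ) * Δ' := mul_le_mul_of_nonneg_left hΔ' hj0R.le
      linarith only [h1, h2]
    have hsubset : {ω | 2 * (1 - ε) * Δ * |∑ i ∈ Finset.range j, Z i ω| < L}
        ⊆ {ω | (∑ i ∈ Finset.range j, Z i ω) ≤ L / (2 * a)} := by
      intro ω hω
      simp only [Set.mem_setOf_eq] at hω ⊢
      have habs : 2 * a * |∑ i ∈ Finset.range j, Z i ω| < L := by
        calc 2 * a * |∑ i ∈ Finset.range j, Z i ω|
            = 2 * (1 - ε) * Δ * |∑ i ∈ Finset.range j, Z i ω| := by rw [ha_def]; ring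
          _ < L := hω
      have h2apos : (0:ℝ) < 2 * a := by linarith
      have : |∑ i ∈ Finset.range j, Z i ω| < L / (2 * a) := by
        rw [lt_div_iff₀ h2apos, mul_comm]; exact habs
      exact le_of_lt (lt_of_le_of_lt (le_abs_self _) this)
    refine (measure_mono hsubset).trans ?_
    have hch := chern j (L / (2 * a)) hj0 hrle
    -- exponent inequality
    have hexp : q * ((j : ℝ) - (M + 1)) ≤ ((j : ℝ) * Δ' - L / (2 * a)) ^ 2 / (2 * j) := by
      have h1 : a * ((j : ℝ) - c) ≤ (j : ℝ) * Δ' - L / (2 * a) := by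
        rw [hra]
        have h : (j : ℝ) * a ≤ (j : ℝ) * Δ' := mul_le_mul_of_nonneg_left hΔ' hj0R.le
        nlinarith only [h]
      have h2 : 0 ≤ a * ((j : ℝ) - c) :=
        mul_nonneg ha.le (by linarith only [hcjR])
      have h3 : (a * ((j : ℝ) - c)) ^ 2 ≤ ((j : ℝ) * Δ' - L / (2 * a)) ^ 2 :=
        pow_le_pow_left₀ h2 h1 2
      have e3 : s * d = 2 * c := by
        rw [hd_def, hc_def, ← hs2]; field_simp
      have hkey : 2 * (j : ℝ) ≤ (s + 2) * ((j : ℝ) - c) := by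
        have hmul : s * (c + d) ≤ s * (j : ℝ) :=
          mul_le_mul_of_nonneg_left hjc.le hs.le
        nlinarith only [hmul, e3]
      have h2' : (0 : ℝ) ≤ (j : ℝ) - c := by linarith only [hcjR]
      have h5 : q * ((j : ℝ) - c) ≤ (a * ((j : ℝ) - c)) ^ 2 / (2 * j) := by
        rw [hq_def, div_mul_eq_mul_div, div_le_div_iff₀ hs20 (by positivity)]
        nlinarith only [mul_le_mul_of_nonneg_left hkey (mul_nonneg (sq_nonneg a) h2')]
      have h4 : q * ((j : ℝ) - (M + 1)) ≤ q * ((j : ℝ) - c) := by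
        have hcM : c ≤ (M : ℝ) + 1 := by linarith only [hMgt, hd]
        apply mul_le_mul_of_nonneg_left (by linarith only [hcM]) hq.le
      have h6 : (a * ((j : ℝ) - c)) ^ 2 / (2 * j) ≤
          ((j : ℝ) * Δ' - L / (2 * a)) ^ 2 / (2 * j) := by gcongr
      linarith only [h4, h5, h6]
    have hmuf : μ {ω | (∑ i ∈ Finset.range j, Z i ω) ≤ L / (2 * a)} ≠ ⊤ :=
      measure_ne_top _ _
    rw [← ENNReal.ofReal_toReal hmuf]
    apply ENNReal.ofReal_le_ofReal
    refine hch.trans ?_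
    apply exp_le_exp.mpr
    linarith only [hexp]
  -- pointwise bound on the stopping time
  have key : ∀ ω, (⨅ n ∈ {n : ℕ | 1 ≤ n ∧
        L ≤ 2 * (1 - ε) * Δ * |∑ i ∈ Finset.range n, Z i ω|}, (n : ℝ≥0∞))
      ≤ 1 + ∑' (k : ℕ), Set.indicator
          {ω' | 2 * (1 - ε) * Δ * |∑ i ∈ Finset.range (k + 1), Z i ω'| < L}
          (fun _ => (1 : ℝ≥0∞)) ω := by
    intro ω
    by_cases hex : ∃ n, 1 ≤ n ∧ L ≤ 2 * (1 - ε) * Δ * |∑ i ∈ Finset.range n, Z i ω|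
    · set k := Nat.find hex with hk_def
      have hspec := Nat.find_spec hex
      have h1 : (⨅ n ∈ {n : ℕ | 1 ≤ n ∧
          L ≤ 2 * (1 - ε) * Δ * |∑ i ∈ Finset.range n, Z i ω|}, (n : ℝ≥0∞)) ≤ (k : ℝ≥0∞) :=
        iInf₂_le k hspec
      refine h1.trans ?_
      have hk1 : 1 ≤ k := hspec.1
      have hterms : ∀ j, j < k - 1 → Set.indicator
          {ω' | 2 * (1 - ε) * Δ * |∑ i ∈ Finset.range (j + 1), Z i ω'| < L}
          (fun _ => (1 : ℝ≥0∞)) ω = 1 := by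
        intro j hj
        have hj1 : j + 1 < k := by omega
        have hmin := Nat.find_min hex hj1
        push_neg at hmin
        have hlt : 2 * (1 - ε) * Δ * |∑ i ∈ Finset.range (j + 1), Z i ω| < L :=
          hmin (by omega)
        have hmem : ω ∈ {ω' | 2 * (1 - ε) * Δ *
            |∑ i ∈ Finset.range (j + 1), Z i ω'| < L} := hlt
        exact Set.indicator_of_mem hmem _
      have hsum : ((k - 1 : ℕ) : ℝ≥0∞) ≤ ∑' (j : ℕ), Set.indicator
          {ω' | 2 * (1 - ε) * Δ * |∑ i ∈ Finset.range (j + 1), Z i ω'| < L}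
          (fun _ => (1 : ℝ≥0∞)) ω := by
        calc ((k - 1 : ℕ) : ℝ≥0∞) = ∑ j ∈ Finset.range (k - 1), 1 := by simp
          _ = ∑ j ∈ Finset.range (k - 1), Set.indicator
              {ω' | 2 * (1 - ε) * Δ * |∑ i ∈ Finset.range (j + 1), Z i ω'| < L}
              (fun _ => (1 : ℝ≥0∞)) ω := by
            refine Finset.sum_congr rfl fun j hj => ?_
            exact (hterms j (Finset.mem_range.mp hj)).symm
          _ ≤ _ := ENNReal.sum_le_tsum _
      have hkeq : (k : ℝ≥0∞) = 1 + ((k - 1 : ℕ) : ℝ≥0∞) := by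
        rw [← Nat.cast_one, ← Nat.cast_add]
        congr 1; omega
      rw [hkeq]
      exact add_le_add_right hsum 1
    · push_neg at hex
      have hall : ∀ j : ℕ, Set.indicator
          {ω' | 2 * (1 - ε) * Δ * |∑ i ∈ Finset.range (j + 1), Z i ω'| < L}
          (fun _ => (1 : ℝ≥0∞)) ω = 1 := by
        intro j
        have hmem : ω ∈ {ω' | 2 * (1 - ε) * Δ *
            |∑ i ∈ Finset.range (j + 1), Z i ω'| < L} := hex (j + 1) (by omega)
        exact Set.indicator_of_mem hmem _
      have htop : (∑' (j : ℕ), Set.indicator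
          {ω' | 2 * (1 - ε) * Δ * |∑ i ∈ Finset.range (j + 1), Z i ω'| < L}
          (fun _ => (1 : ℝ≥0∞)) ω) = ⊤ := by
        rw [tsum_congr hall]
        exact ENNReal.tsum_const_eq_top_of_ne_zero one_ne_zero
      rw [htop]
      simp
  -- measurability of the bad sets
  have hBmeas : ∀ j : ℕ, MeasurableSet
      {ω | 2 * (1 - ε) * Δ * |∑ i ∈ Finset.range j, Z i ω| < L} := by
    intro j
    have hS : Measurable fun ω => ∑ i ∈ Finset.range j, Z i ω :=
      Finset.measurable_sum _ fun i _ => hmeas i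
    exact measurableSet_lt (hS.abs.const_mul _) measurable_const
  -- integrate
  have hint_bound : (∫⁻ ω, ⨅ n ∈ {n : ℕ | 1 ≤ n ∧
        L ≤ 2 * (1 - ε) * Δ * |∑ i ∈ Finset.range n, Z i ω|}, (n : ℝ≥0∞) ∂μ)
      ≤ 1 + ∑' (k : ℕ),
          μ {ω | 2 * (1 - ε) * Δ * |∑ i ∈ Finset.range (k + 1), Z i ω| < L} := by
    refine (lintegral_mono key).trans ?_
    rw [lintegral_add_left measurable_const, lintegral_const, measure_univ, mul_one]
    refine add_le_add_right ?_ 1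
    rw [lintegral_tsum fun k => (measurable_const.indicator (hBmeas (k + 1))).aemeasurable]
    refine le_of_eq (tsum_congr fun k => ?_)
    rw [lintegral_indicator_const (hBmeas (k + 1)), one_mul]
  -- bound the series
  set f : ℕ → ℝ≥0∞ := fun k =>
    μ {ω | 2 * (1 - ε) * Δ * |∑ i ∈ Finset.range (k + 1), Z i ω| < L} with hf_def
  set g1 : ℕ → ℝ≥0∞ := fun n => if n < M then 1 else 0 with hg1_def
  set g2 : ℕ → ℝ≥0∞ := fun n =>
    if M ≤ n then ENNReal.ofReal (exp (-q * ((n : ℝ) - M))) else 0 with hg2_def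
  have hfg : ∀ n, f n ≤ g1 n + g2 n := by
    intro n
    by_cases h : n < M
    · have : f n ≤ 1 := prob_le_one
      calc f n ≤ 1 := this
        _ = g1 n := by simp [hg1_def, h]
        _ ≤ g1 n + g2 n := le_self_add
    · push_neg at h
      have hn1 : M + 1 ≤ n + 1 := by omega
      have := hterm (n + 1) hn1
      have hcast : ((n + 1 : ℕ) : ℝ) - ((M : ℝ) + 1) = (n : ℝ) - M := by push_cast; ring
      rw [hcast] at this
      calc f n ≤ ENNReal.ofReal (exp (-q * ((n : ℝ) - M))) := this
        _ = g2 n := by simp [hg2_def, h]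
        _ ≤ g1 n + g2 n := le_add_self
  have hg1sum : ∑' n, g1 n = (M : ℝ≥0∞) := by
    rw [tsum_eq_sum (s := Finset.range M) (fun n hn => by
      simp only [hg1_def]; rw [if_neg (by simpa using Finset.mem_range.not.mp hn)])]
    rw [Finset.sum_congr rfl fun n hn => by
      simp only [hg1_def]; rw [if_pos (Finset.mem_range.mp hn)]]
    simp
  have hg2sum : ∑' n, g2 n ≤ ENNReal.ofReal (1 + 1 / q) := by
    have hshift : ∑' n, g2 n = ∑' k, g2 (k + M) := by
      refine (Function.Injective.tsum_eq (add_left_injective M) ?_).symm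
      intro n hn
      simp only [Function.mem_support, hg2_def] at hn
      by_contra hmem
      simp only [Set.mem_range, not_exists] at hmem
      have : ¬ M ≤ n := by
        intro hMn
        exact hmem (n - M) (by omega)
      rw [if_neg this] at hn
      exact hn rfl
    rw [hshift]
    have hg2k : ∀ k : ℕ, g2 (k + M) = ENNReal.ofReal (exp (-q) ^ k) := by
      intro k
      simp only [hg2_def, if_pos (Nat.le_add_left M k)]
      congr 1
      rw [← Real.exp_nat_mul]
      congr 1
      push_cast; ring
    rw [tsum_congr hg2k]
    have hexpq : exp (-q) < 1 := exp_lt_one_iff.mpr (by linarith)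
    rw [← ENNReal.ofReal_tsum_of_nonneg (fun k => by positivity)
      (summable_geometric_of_lt_one (exp_pos _).le hexpq)]
    apply ENNReal.ofReal_le_ofReal
    rw [tsum_geometric_of_lt_one (exp_pos _).le hexpq]
    -- (1 - exp(-q))⁻¹ ≤ 1 + 1/q
    have h1 : 0 < 1 - exp (-q) := by linarith only [hexpq]
    have h2 : q + 1 ≤ exp q := by
      have h := Real.add_one_le_exp q
      linarith only [h]
    have h3 : exp (-q) * exp q = 1 := by rw [← exp_add]; simp
    have h4 : exp (-q) * (q + 1) ≤ 1 := by
      nlinarith only [h2, h3, exp_pos (-q)]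
    have h6 : (1 - exp (-q))⁻¹ ≤ (q + 1) / q := by
      rw [← one_div, div_le_div_iff₀ h1 hq]
      nlinarith only [h4]
    have h7 : (q + 1) / q = 1 + 1 / q := by field_simp
    rw [← h7]
    exact h6
  -- assemble
  refine hint_bound.trans ?_
  have hsum_le : ∑' k, f k ≤ (M : ℝ≥0∞) + ENNReal.ofReal (1 + 1 / q) := by
    calc ∑' k, f k ≤ ∑' k, (g1 k + g2 k) := ENNReal.tsum_le_tsum hfg
      _ = ∑' k, g1 k + ∑' k, g2 k := ENNReal.tsum_add
      _ ≤ (M : ℝ≥0∞) + ENNReal.ofReal (1 + 1 / q) := by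
          rw [hg1sum]; exact add_le_add_right hg2sum _
  calc 1 + ∑' k, f k ≤ 1 + ((M : ℝ≥0∞) + ENNReal.ofReal (1 + 1 / q)) :=
        add_le_add_right hsum_le 1
    _ = ENNReal.ofReal (1 + ((M : ℝ) + (1 + 1 / q))) := by
        rw [ENNReal.ofReal_add (by norm_num : (0:ℝ) ≤ 1)
            (by linarith only [hinvq] : (0:ℝ) ≤ (M : ℝ) + (1 + 1 / q)),
          ENNReal.ofReal_add (by positivity : (0:ℝ) ≤ (M : ℝ))
            (by linarith only [hinvq] : (0:ℝ) ≤ 1 + 1 / q),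
          ENNReal.ofReal_one, ENNReal.ofReal_natCast]
    _ ≤ ENNReal.ofReal R := by
        apply ENNReal.ofReal_le_ofReal
        have hfin : 1 + ((M : ℝ) + (1 + 1 / q)) ≤ 2 + c + (2 * s + 2) / a ^ 2 := by
          have hM' : (M : ℝ) ≤ c + s / a ^ 2 := hd_def ▸ hMle
          have hsplit : (2 * s + 2) / a ^ 2 = s / a ^ 2 + (s + 2) / a ^ 2 := by ring
          linarith only [h1q, hM', hsplit]
        refine hfin.trans (le_of_eq ?_)
        rw [hR_def, hc_def, ha_def]
        ring
  done
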